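/- Assume b > (n−1)a > 0. If (λ,μ) and (λ',μ') are bipartitions of n with Z^N_{a,b}(λ,μ) ⊴ Z^N_{a,b}(λ',μ') (dominance of multisets, comparing decreasing rearrangements by partial sums), then λ ⊴ λ' in the dominance order for partitions of possibly different sizes (all partial sums of λ are at most those of λ'). -/

import Mathlib

open List

/-- Partial sum of the first `d` parts of a partition (given as a function). -/
def psum (f : ℕ → ℕ) (d : ℕ) : ℕ := ∑ i ∈ Finset.range d, f i

/-- Dominance order between partitions of possibly different numbers. -/
def Dom (f g : ℕ → ℕ) : Prop := ∀ d, psum f d ≤ psum g d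

/-- Decreasing enumeration of a multiset of natural numbers. -/
def dsort (M : Multiset ℕ) : List ℕ := (M.sort (· ≤ ·)).reverse

/-- Dominance order on multisets of naturals (same size, same sum). -/
def MDom (M M' : Multiset ℕ) : Prop :=
  ∀ d, ((dsort M).take d).sum ≤ ((dsort M').take d).sum

/-- Lusztig's multiset `Z^N_{a,b}(λ,μ)` (with `b = r·a + b'`), 0-indexed. -/
def Zab (a b' r N : ℕ) (l m : ℕ → ℕ) : Multiset ℕ :=
  ((Finset.range (N + r)).val.map fun i => (l i + (N + r - 1 - i)) * a + b') +
  ((Finset.range N).val.map fun j => (m j + (N - 1 - j)) * a)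

section Helpers

lemma sum_le_sum_take_of_subperm :
    ∀ (L : List ℕ), L.Pairwise (· ≥ ·) → ∀ (l₁ : List ℕ), l₁.Pairwise (· ≥ ·) →
      l₁ <+~ L → l₁.sum ≤ (L.take l₁.length).sum := by
  intro L
  induction L with
  | nil =>
    intro _ l₁ _ h
    rw [List.subperm_nil] at h; subst h; simp
  | cons b T ih =>
    intro hL l₁ hl₁ h
    cases l₁ with
    | nil => simp
    | cons a T1 =>
      have hb : ∀ x ∈ T, x ≤ b := fun x hx => (List.pairwise_cons.mp hL).1 x hx
      have hT : T.Pairwise (· ≥ ·) := (List.pairwise_cons.mp hL).2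
      have ha : ∀ x ∈ T1, x ≤ a := fun x hx => (List.pairwise_cons.mp hl₁).1 x hx
      have hT1 : T1.Pairwise (· ≥ ·) := (List.pairwise_cons.mp hl₁).2
      have hmem : a ∈ b :: T := h.subset List.mem_cons_self
      have hab : a ≤ b := by
        rcases List.mem_cons.mp hmem with h1 | h1
        · exact le_of_eq h1
        · exact hb a h1
      have hsub : T1 <+~ T := by
        rw [List.subperm_ext_iff]
        intro x hx
        have hxcnt := (List.subperm_ext_iff.mp h) x (List.mem_cons_of_mem a hx)
        rw [List.count_cons, List.count_cons] at hxcnt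
        simp only [beq_iff_eq] at hxcnt
        by_cases hxb : b = x
        · have hax : a = x := le_antisymm (hxb ▸ hab) (ha x hx)
          rw [if_pos hxb, if_pos hax] at hxcnt
          omega
        · rw [if_neg hxb] at hxcnt
          exact le_trans (Nat.le_add_right _ _) hxcnt
      have hih := ih hT T1 hT1 hsub
      simp only [List.length_cons, List.take_succ_cons, List.sum_cons]
      omega

lemma dsort_coe (M : Multiset ℕ) : (↑(dsort M) : Multiset ℕ) = M := by
  unfold dsort
  rw [Multiset.coe_reverse, Multiset.sort_eq]

lemma dsort_sorted (M : Multiset ℕ) : (dsort M).Pairwise (· ≥ ·) := by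
  unfold dsort
  rw [List.pairwise_reverse]
  exact Multiset.pairwise_sort (s := M) (r := (· ≤ ·))

lemma length_dsort (M : Multiset ℕ) : (dsort M).length = Multiset.card M := by
  unfold dsort
  rw [List.length_reverse, Multiset.length_sort]

lemma msum_le_take (L : List ℕ) (hL : L.Pairwise (· ≥ ·)) (S : Multiset ℕ) (h : S ≤ ↑L) :
    S.sum ≤ (L.take (Multiset.card S)).sum := by
  have h1 : (↑(dsort S) : Multiset ℕ) ≤ ↑L := by rw [dsort_coe]; exact h
  have h2 := sum_le_sum_take_of_subperm L hL (dsort S) (dsort_sorted S) (Multiset.coe_le.mp h1)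
  rw [length_dsort] at h2
  calc S.sum = (↑(dsort S) : Multiset ℕ).sum := by rw [dsort_coe]
    _ = (dsort S).sum := Multiset.sum_coe _
    _ ≤ _ := h2

lemma sorted_map_range (f : ℕ → ℕ) (hf : Antitone f) (t : ℕ) :
    ((List.range t).map f).Pairwise (· ≥ ·) := by
  rw [List.pairwise_map]
  exact (List.pairwise_lt_range (n := t)).imp (fun h => hf h.le)

lemma fin_sum_eq_list (k : ℕ) (f : ℕ → ℕ) :
    (∑ i ∈ Finset.range k, f i) = ((List.range k).map f).sum := by
  rw [Finset.sum_eq_multiset_sum, Finset.range_val]; rfl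

lemma coe_map_range (f : ℕ → ℕ) (t : ℕ) :
    (Finset.range t).val.map f = (((List.range t).map f : List ℕ) : Multiset ℕ) := by
  rw [Finset.range_val]; rfl

/-- The main inductive step: if the first `d` parts of `l` are all positive, then
`psum l d ≤ psum l' d`. -/
lemma main_step (n a b' r N : ℕ) (ha : 0 < a) (hb'a : b' < a)
    (hnr1 : n ≤ r + 1) (hnr0 : b' = 0 → n ≤ r)
    (l m l' m' : ℕ → ℕ) (hl' : Antitone l') (hm' : Antitone m')
    (hn : psum l (N + r) + psum m N = n)
    (hn' : psum l' (N + r) + psum m' N = n)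
    (hdom : MDom (Zab a b' r N l m) (Zab a b' r N l' m'))
    (d : ℕ) (hdN : d ≤ N + r) (hld : ∀ i < d, 1 ≤ l i) :
    psum l d ≤ psum l' d := by
  classical
  have hpd : d ≤ psum l d := by
    have h1 : ∑ _i ∈ Finset.range d, 1 ≤ ∑ i ∈ Finset.range d, l i :=
      Finset.sum_le_sum (fun i hi => hld i (Finset.mem_range.mp hi))
    simpa [psum] using h1
  have hpn : psum l d ≤ n := by
    have h1 : psum l d ≤ psum l (N + r) :=
      Finset.sum_le_sum_of_subset (Finset.range_subset_range.mpr hdN)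
    omega
  have hdn : d ≤ n := le_trans hpd hpn
  -- antitonicity of the enumerating functions
  have hf'anti : Antitone (fun i => (l' i + (N + r - 1 - i)) * a + b') := by
    intro i j hij
    exact Nat.add_le_add
      (Nat.mul_le_mul_right a (Nat.add_le_add (hl' hij) (Nat.sub_le_sub_left hij _))) le_rfl
  have hg'anti : Antitone (fun j => (m' j + (N - 1 - j)) * a) := by
    intro i j hij
    exact Nat.mul_le_mul_right a (Nat.add_le_add (hm' hij) (Nat.sub_le_sub_left hij _))
  -- lower bound: sum of first d elements of the first family of Z is ≤ top-d of Z
  have hS0le : ((((List.range d).map fun i => (l i + (N + r - 1 - i)) * a + b') : List ℕ) :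
      Multiset ℕ) ≤ Zab a b' r N l m := by
    unfold Zab
    refine le_trans ?_ (Multiset.le_add_right _ _)
    rw [coe_map_range]
    exact Multiset.coe_le.mpr
      (((List.range_sublist.mpr hdN).map _).subperm)
  have key1 : (∑ i ∈ Finset.range d, ((l i + (N + r - 1 - i)) * a + b'))
      ≤ ((dsort (Zab a b' r N l m)).take d).sum := by
    have h2 := msum_le_take (dsort (Zab a b' r N l m)) (dsort_sorted _)
      ((((List.range d).map fun i => (l i + (N + r - 1 - i)) * a + b') : List ℕ) : Multiset ℕ)
      (by rw [dsort_coe]; exact hS0le)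
    have hc : Multiset.card
        ((((List.range d).map fun i => (l i + (N + r - 1 - i)) * a + b') : List ℕ) : Multiset ℕ)
        = d := by
      simp
    rw [hc, Multiset.sum_coe, ← fin_sum_eq_list] at h2
    exact h2
  -- top-d of Z' decomposes into parts from the two families
  have hZ'card : Multiset.card (Zab a b' r N l' m') = N + r + N := by
    unfold Zab
    simp [Multiset.card_add, Multiset.card_map]
  have hS'le : (↑((dsort (Zab a b' r N l' m')).take d) : Multiset ℕ) ≤ Zab a b' r N l' m' := by
    conv_rhs => rw [← dsort_coe (Zab a b' r N l' m')]
    exact Multiset.coe_le.mpr (List.take_sublist d _).subperm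
  have hS'card : Multiset.card (↑((dsort (Zab a b' r N l' m')).take d) : Multiset ℕ) = d := by
    simp only [Multiset.coe_card, List.length_take, length_dsort, hZ'card]
    omega
  set B' : Multiset ℕ := (Finset.range N).val.map (fun j => (m' j + (N - 1 - j)) * a) with hB'
  set A' : Multiset ℕ := (Finset.range (N + r)).val.map
    (fun i => (l' i + (N + r - 1 - i)) * a + b') with hA'
  have hZ'AB : Zab a b' r N l' m' = A' + B' := rfl
  set S' : Multiset ℕ := (↑((dsort (Zab a b' r N l' m')).take d) : Multiset ℕ) with hS'
  set SA : Multiset ℕ := S' - B' with hSAdef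
  set SB : Multiset ℕ := S' ∩ B' with hSBdef
  have hSA : SA ≤ A' := Multiset.sub_le_iff_le_add.mpr (by rw [← hZ'AB]; exact hS'le)
  have hSB : SB ≤ B' := Multiset.inter_le_right
  have hsplit : SA + SB = S' := Multiset.sub_add_inter _ _
  set k := Multiset.card SA with hk
  set σ := Multiset.card SB with hσ
  have hkσ : k + σ = d := by
    rw [hk, hσ, ← Multiset.card_add, hsplit, hS'card]
  have hkNr : k ≤ N + r := by
    have h3 := Multiset.card_le_card hSA
    simpa [hA', Multiset.card_map] using h3
  have hσN : σ ≤ N := by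
    have h3 := Multiset.card_le_card hSB
    simpa [hB', Multiset.card_map] using h3
  have hSAsum : SA.sum ≤ ∑ i ∈ Finset.range k, ((l' i + (N + r - 1 - i)) * a + b') := by
    have h4 := msum_le_take ((List.range (N + r)).map fun i => (l' i + (N + r - 1 - i)) * a + b')
      (sorted_map_range _ hf'anti _) SA (by rw [← coe_map_range]; exact hSA)
    rw [← List.map_take, List.take_range, Nat.min_eq_left hkNr] at h4
    rw [fin_sum_eq_list]
    exact h4
  have hSBsum : SB.sum ≤ ∑ j ∈ Finset.range σ, ((m' j + (N - 1 - j)) * a) := by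
    have h4 := msum_le_take ((List.range N).map fun j => (m' j + (N - 1 - j)) * a)
      (sorted_map_range _ hg'anti _) SB (by rw [← coe_map_range]; exact hSB)
    rw [← List.map_take, List.take_range, Nat.min_eq_left hσN] at h4
    rw [fin_sum_eq_list]
    exact h4
  have hS'sum : ((dsort (Zab a b' r N l' m')).take d).sum = SA.sum + SB.sum := by
    rw [← Multiset.sum_coe, ← hS', ← hsplit, Multiset.sum_add]
  have chain : (∑ i ∈ Finset.range d, ((l i + (N + r - 1 - i)) * a + b'))
      ≤ (∑ i ∈ Finset.range k, ((l' i + (N + r - 1 - i)) * a + b'))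
        + (∑ j ∈ Finset.range σ, ((m' j + (N - 1 - j)) * a)) := by
    calc _ ≤ ((dsort (Zab a b' r N l m)).take d).sum := key1
      _ ≤ ((dsort (Zab a b' r N l' m')).take d).sum := hdom d
      _ = SA.sum + SB.sum := hS'sum
      _ ≤ _ := add_le_add hSAsum hSBsum
  -- expand sums
  have Ef : ∀ (h : ℕ → ℕ) (t : ℕ), (∑ i ∈ Finset.range t, ((h i + (N + r - 1 - i)) * a + b'))
      = (psum h t + ∑ i ∈ Finset.range t, (N + r - 1 - i)) * a + t * b' := by
    intro h t
    rw [Finset.sum_add_distrib, Finset.sum_const, Finset.card_range, smul_eq_mul,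
      ← Finset.sum_mul, Finset.sum_add_distrib, psum]
  have Eg : ∀ (t : ℕ), (∑ j ∈ Finset.range t, ((m' j + (N - 1 - j)) * a))
      = (psum m' t + ∑ j ∈ Finset.range t, (N - 1 - j)) * a := by
    intro t
    rw [← Finset.sum_mul, Finset.sum_add_distrib, psum]
  rw [Ef l d, Ef l' k, Eg σ] at chain
  rcases Nat.eq_zero_or_pos σ with hσ0 | hσ1
  · -- no second-family elements in the top d: direct comparison
    have hkd : k = d := by omega
    rw [hσ0, hkd] at chain
    simp only [psum, Finset.range_zero, Finset.sum_empty, zero_add, zero_mul, add_zero] at chain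
    have h5 := Nat.le_of_add_le_add_right chain
    have h6 := Nat.le_of_mul_le_mul_right h5 ha
    unfold psum
    omega
  · -- second-family elements present: contradiction
    exfalso
    have hkr : k ≤ r := by omega
    have hu : k + (r - k) = r := by omega
    set u := r - k with hudef
    have Csplit : (∑ i ∈ Finset.range d, (N + r - 1 - i))
        = (∑ i ∈ Finset.range k, (N + r - 1 - i)) + ((∑ j ∈ Finset.range σ, (N - 1 - j)) + σ * u) := by
      have h5 : ∑ i ∈ Finset.range d, (N + r - 1 - i)
          = (∑ i ∈ Finset.range k, (N + r - 1 - i)) + ∑ i ∈ Finset.Ico k d, (N + r - 1 - i) := by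
        rw [Finset.range_eq_Ico, ← Finset.sum_Ico_consecutive _ (Nat.zero_le k) (by omega : k ≤ d),
          ← Finset.range_eq_Ico]
      have hdk : d - k = σ := by omega
      have h6 : ∑ i ∈ Finset.Ico k d, (N + r - 1 - i)
          = ∑ t ∈ Finset.range σ, (N + r - 1 - (k + t)) := by
        rw [Finset.sum_Ico_eq_sum_range, hdk]
      have h7 : ∀ t ∈ Finset.range σ, N + r - 1 - (k + t) = (N - 1 - t) + u := by
        intro t ht
        have ht' := Finset.mem_range.mp ht
        omega
      rw [h5, h6, Finset.sum_congr rfl h7, Finset.sum_add_distrib, Finset.sum_const,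
        Finset.card_range, smul_eq_mul]
    have hP' : psum l' k + psum m' σ ≤ n := by
      have h8 : psum l' k ≤ psum l' (N + r) :=
        Finset.sum_le_sum_of_subset (Finset.range_subset_range.mpr hkNr)
      have h9 : psum m' σ ≤ psum m' N :=
        Finset.sum_le_sum_of_subset (Finset.range_subset_range.mpr hσN)
      omega
    -- key purely arithmetic facts
    obtain ⟨w, hww⟩ : ∃ w, w = σ * u := ⟨_, rfl⟩
    have hw1 : 1 + u ≤ σ + w := by
      have h10 : 1 + u ≤ σ * (1 + u) := Nat.le_mul_of_pos_left (1 + u) hσ1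
      have h11 : σ * (1 + u) = σ + σ * u := by ring
      rw [h11, ← hww] at h10
      exact h10
    rw [Csplit] at chain
    set Ck := ∑ i ∈ Finset.range k, (N + r - 1 - i) with hCk
    set Dσ := ∑ j ∈ Finset.range σ, (N - 1 - j) with hDσ
    rw [← hww] at chain
    -- chain : (psum l d + (Ck + (Dσ + w))) * a + d * b'
    --       ≤ (psum l' k + Ck) * a + k * b' + (psum m' σ + Dσ) * a
    rcases Nat.eq_zero_or_pos b' with hb0 | hb1
    · have hn0 := hnr0 hb0
      rw [hb0, Nat.mul_zero, Nat.mul_zero, Nat.add_zero, Nat.add_zero] at chain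
      rw [← Nat.add_mul] at chain
      have h12 := Nat.le_of_mul_le_mul_right chain ha
      omega
    · have hdb : d * b' = k * b' + σ * b' := by rw [← hkσ, Nat.add_mul]
      have hσb : 1 ≤ σ * b' := Nat.mul_pos hσ1 hb1
      have hcore : (psum l' k + Ck) + (psum m' σ + Dσ) ≤ psum l d + (Ck + (Dσ + w)) := by
        omega
      have hmul : ((psum l' k + Ck) + (psum m' σ + Dσ)) * a
          ≤ (psum l d + (Ck + (Dσ + w))) * a := Nat.mul_le_mul_right a hcore
      rw [Nat.add_mul] at hmul
      -- hmul : (psum l' k + Ck)*a + (psum m' σ + Dσ)*a + a ≤ (psum l d + ...)*a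
      omega
    
end Helpers

theorem asymptotic_symbol_dominance_implies_first_component (n a b r b' N : ℕ)
    (hna : 0 < (n - 1) * a) (hab : (n - 1) * a < b)
    (hbr : b = r * a + b') (hb'a : b' < a)
    (l m l' m' : ℕ → ℕ)
    (hl : Antitone l) (hm : Antitone m) (hl' : Antitone l') (hm' : Antitone m')
    (hlN : ∀ i, N + r ≤ i → l i = 0) (hmN : ∀ j, N ≤ j → m j = 0)
    (hl'N : ∀ i, N + r ≤ i → l' i = 0) (hm'N : ∀ j, N ≤ j → m' j = 0)
    (hn : psum l (N + r) + psum m N = n)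
    (hn' : psum l' (N + r) + psum m' N = n)
    (hdom : MDom (Zab a b' r N l m) (Zab a b' r N l' m')) :
    Dom l l' := by
  have ha : 0 < a := by
    rcases Nat.eq_zero_or_pos a with h | h
    · subst h; simp at hna
    · exact h
  have hnr1 : n ≤ r + 1 := by
    have h1 : (n - 1) * a < (r + 1) * a := by
      calc (n - 1) * a < b := hab
        _ = r * a + b' := hbr
        _ < r * a + a := by omega
        _ = (r + 1) * a := by ring
    have h2 := Nat.lt_of_mul_lt_mul_right h1
    omega
  have hnr0 : b' = 0 → n ≤ r := by
    intro h0
    have h1 : (n - 1) * a < r * a := by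
      rw [hbr, h0, Nat.add_zero] at hab; exact hab
    have h2 := Nat.lt_of_mul_lt_mul_right h1
    have h3 : n - 1 ≠ 0 := by
      intro h; rw [h] at hna; simp at hna
    omega
  intro d
  induction d with
  | zero => simp [psum]
  | succ e ih =>
    by_cases h0 : l e = 0
    · have h1 : psum l (e + 1) = psum l e := by
        rw [psum, Finset.sum_range_succ, h0, Nat.add_zero, psum]
      have h2 : psum l' e ≤ psum l' (e + 1) := by
        rw [psum, psum, Finset.sum_range_succ]
        omega
      omega
    · have heN : e < N + r := by
        by_contra hc
        exact h0 (hlN e (by omega))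
      refine main_step n a b' r N ha hb'a hnr1 hnr0 l m l' m' hl' hm' hn hn' hdom (e + 1)
        (by omega) ?_
      intro i hi
      have h1 : l e ≤ l i := hl (by omega)
      omega
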